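/- Let ω > 0, ψ > 0, φ > 0, g > 0 and c > 0 be real constants. Define a(y) = ω·g/(c·y·φ) − ψ·g/(c·φ) for 0 < y < ω/ψ (so that a(y) > 0 on this interval), and define h(y) = 1 − ψ·y/ω − f̄(a(y)). Then h is strictly decreasing on (0, ω/ψ); in particular, h has at most one zero in (0, ω/ψ). -/

import Mathlib

private lemma F_hasDerivAt (x : ℝ) (hx : 0 < x) :
    HasDerivAt (fun x : ℝ => (1 + x) * Real.log (1 + x) / x)
      ((x - Real.log (1 + x)) / x ^ 2) x := by
  have h1x : (0:ℝ) < 1 + x := by linarith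
  have h1 : HasDerivAt (fun x : ℝ => 1 + x) 1 x := by
    simpa using (hasDerivAt_id x).const_add (1:ℝ)
  have h2 : HasDerivAt (fun x : ℝ => Real.log (1 + x)) ((1 + x)⁻¹ * 1) x :=
    (Real.hasDerivAt_log h1x.ne').comp x h1
  have hu : HasDerivAt (fun x : ℝ => (1 + x) * Real.log (1 + x))
      (1 * Real.log (1 + x) + (1 + x) * ((1 + x)⁻¹ * 1)) x := h1.mul h2
  have := hu.div (hasDerivAt_id x) hx.ne'
  refine this.congr_deriv ?_
  simp only [id, mul_one, one_mul, mul_inv_cancel₀ h1x.ne']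
  ring

private lemma F_strictMono :
    StrictMonoOn (fun x : ℝ => (1 + x) * Real.log (1 + x) / x) (Set.Ioi 0) := by
  have hcont : ContinuousOn (fun x : ℝ => (1 + x) * Real.log (1 + x) / x) (Set.Ioi 0) := by
    intro x hx
    exact (F_hasDerivAt x hx).continuousAt.continuousWithinAt
  refine strictMonoOn_of_deriv_pos (convex_Ioi 0) hcont ?_
  intro x hx
  rw [interior_Ioi, Set.mem_Ioi] at hx
  rw [(F_hasDerivAt x hx).deriv]
  have hlog : Real.log (1 + x) < x := by
    have := Real.log_lt_sub_one_of_pos (by linarith : (0:ℝ) < 1 + x) (by linarith)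
    linarith
  have hnum : 0 < x - Real.log (1 + x) := by linarith
  positivity

private lemma F_pos (x : ℝ) (hx : 0 < x) : 0 < (1 + x) * Real.log (1 + x) / x := by
  have : 0 < Real.log (1 + x) := Real.log_pos (by linarith)
  positivity

private lemma fbar_anti {x y : ℝ} (hx : 0 < x) (hxy : x < y) :
    y / ((1 + y) * Real.log (1 + y)) < x / ((1 + x) * Real.log (1 + x)) := by
  have hy : 0 < y := hx.trans hxy
  have hF := F_strictMono (Set.mem_Ioi.mpr hx) (Set.mem_Ioi.mpr hy) hxy
  have hFx := F_pos x hx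
  have h := one_div_lt_one_div_of_lt hFx hF
  rwa [one_div_div, one_div_div] at h

/-- Appendix E: the KKT function h(y) = 1 − ψy/ω − f̄(a(y)), with
a(y) = ωg/(cyφ) − ψg/(cφ) and f̄(x) = x/((1+x)·ln(1+x)), is strictly decreasing
on (0, ω/ψ); in particular it has at most one zero there. -/
theorem kkt_function_strictAnti_and_unique_zero
    (ω ψ φ g c : ℝ) (hω : 0 < ω) (hψ : 0 < ψ) (hφ : 0 < φ) (hg : 0 < g)
    (hc : 0 < c)
    (a : ℝ → ℝ) (ha : ∀ y, a y = ω * g / (c * y * φ) - ψ * g / (c * φ))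
    (h : ℝ → ℝ)
    (hh : ∀ y, h y = 1 - ψ * y / ω - a y / ((1 + a y) * Real.log (1 + a y))) :
    (∀ y ∈ Set.Ioo (0 : ℝ) (ω / ψ), 0 < a y) ∧
    StrictAntiOn h (Set.Ioo 0 (ω / ψ)) ∧
    (∀ y₁ ∈ Set.Ioo (0 : ℝ) (ω / ψ), ∀ y₂ ∈ Set.Ioo (0 : ℝ) (ω / ψ),
      h y₁ = 0 → h y₂ = 0 → y₁ = y₂) := by
  have hapos : ∀ y ∈ Set.Ioo (0 : ℝ) (ω / ψ), 0 < a y := by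
    intro y hy
    obtain ⟨hy0, hy1⟩ := hy
    rw [ha y, sub_pos, div_lt_div_iff₀ (by positivity) (by positivity)]
    have : ψ * y < ω := by have := (lt_div_iff₀ hψ).mp hy1; linarith
    nlinarith [mul_pos hc hφ, mul_pos hg (mul_pos hc hφ)]
  have hanti : StrictAntiOn h (Set.Ioo 0 (ω / ψ)) := by
    intro y₁ hy₁ y₂ hy₂ hlt
    have ha1 := hapos y₁ hy₁
    have ha2 := hapos y₂ hy₂
    have haa : a y₂ < a y₁ := by
      rw [ha y₁, ha y₂]
      have hy10 := hy₁.1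
      have : ω * g / (c * y₂ * φ) < ω * g / (c * y₁ * φ) := by
        apply div_lt_div_of_pos_left (by positivity) (by positivity)
        nlinarith [mul_pos hc hφ]
      linarith
    have hf := fbar_anti ha2 haa
    rw [hh y₁, hh y₂]
    have : ψ * y₁ / ω < ψ * y₂ / ω := by
      apply div_lt_div_of_pos_right _ hω
      nlinarith
    linarith
  refine ⟨hapos, hanti, ?_⟩
  intro y₁ hy₁ y₂ hy₂ hz₁ hz₂
  by_contra hne
  rcases lt_or_gt_of_ne hne with hlt | hlt
  · have := hanti hy₁ hy₂ hlt; rw [hz₁, hz₂] at this; exact lt_irrefl 0 this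
  · have := hanti hy₂ hy₁ hlt; rw [hz₁, hz₂] at this; exact lt_irrefl 0 this
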